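/- Let ≻ be an acyclic relation on a finite set X, and suppose a choice function f with f(t) ∈ X_t satisfies: f(t) ≻ y for all y ∈ X_t ∖ {f(t)} implies no cycle through the union of these relations. Then there exists an injective utility function u : X → ℝ such that f(t) = argmax_{x ∈ X_t} u(x) for every t. (Any linear extension of the transitive closure of the revealed preference relation works.) -/

import Mathlib

/-- If the revealed preference relation of a choice function is acyclic, then the choice
function is rationalized by some injective utility function. -/
theorem acyclic_implies_rationalizable
    {T : ℕ} {α : Type*} [Fintype α]
    (X : Fin T → Finset α) (f : Fin T → α) (hf : ∀ t, f t ∈ X t)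
    (hacyc : ∀ x, ¬ Relation.TransGen
        (fun x y => ∃ t, x = f t ∧ y ∈ X t ∧ y ≠ x) x x) :
    ∃ u : α → ℝ, Function.Injective u ∧
      ∀ t, f t ∈ X t ∧ ∀ y ∈ X t, y ≠ f t → u y < u (f t) := by
  classical
  set r : α → α → Prop := fun x y => ∃ t, x = f t ∧ y ∈ X t ∧ y ≠ x with hr
  -- partial order: a ≤ b iff a = b or TransGen r b a
  set le : α → α → Prop := fun a b => a = b ∨ Relation.TransGen r b a with hle
  have hrefl : ∀ a, le a a := fun a => Or.inl rfl
  have htrans : ∀ a b c, le a b → le b c → le a c := by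
    rintro a b c (rfl | hab) (rfl | hbc)
    · exact Or.inl rfl
    · exact Or.inr hbc
    · exact Or.inr hab
    · exact Or.inr (hbc.trans hab)
  have hanti : ∀ a b, le a b → le b a → a = b := by
    intro a b hab hba
    rcases hab with rfl | hab
    · rfl
    rcases hba with rfl | hba
    · rfl
    exact absurd (hab.trans hba) (hacyc b)
  haveI : IsPartialOrder α le :=
    { refl := hrefl, trans := htrans, antisymm := hanti }
  obtain ⟨s, hs, hles⟩ := extend_partialOrder le
  haveI := hs
  letI : LinearOrder α :=
    { le := s
      le_refl := fun a => Std.Refl.refl a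
      le_trans := fun a b c => IsTrans.trans a b c
      le_antisymm := fun a b => Std.Antisymm.antisymm a b
      le_total := Std.Total.total
      toDecidableLE := fun a b => Classical.dec _ }
  let e : α ≃o Fin (Fintype.card α) := (monoEquivOfFin α rfl).symm
  refine ⟨fun x => (e x : ℕ), ?_, ?_⟩
  · intro a b hab
    exact e.injective (Fin.ext (Nat.cast_injective hab))
  · intro t
    refine ⟨hf t, fun y hy hyne => ?_⟩
    have hlt : y < f t := by
      have h1 : s y (f t) := hles y (f t) (Or.inr (Relation.TransGen.single ⟨t, rfl, hy, hyne⟩))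
      exact lt_of_le_of_ne h1 hyne
    have := e.strictMono hlt
    exact Nat.cast_lt.mpr this
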